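/- If a continuous map f : I → I of a compact interval has a periodic point of least period 3, then for every positive integer n, f has a periodic point of least period n (period three implies all periods). -/

import Mathlib

/-- `x` has least period `m` under `f`. -/
def IsLeastPeriod (f : ℝ → ℝ) (x : ℝ) (m : ℕ) : Prop :=
  0 < m ∧ f^[m] x = x ∧ ∀ k, 0 < k → k < m → f^[k] x ≠ x

open Set


lemma fix_of_cover {u v : ℝ} (huv : u ≤ v) (g : ℝ → ℝ) (hg : ContinuousOn g (Icc u v))
    (hcov : Icc u v ⊆ g '' Icc u v) : ∃ x ∈ Icc u v, g x = x := by
  obtain ⟨x0, hx0, hgx0⟩ := hcov (left_mem_Icc.2 huv)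
  obtain ⟨x1, hx1, hgx1⟩ := hcov (right_mem_Icc.2 huv)
  have hsub : uIcc x0 x1 ⊆ Icc u v := uIcc_subset_Icc hx0 hx1
  have hc : ContinuousOn (fun x => g x - x) (uIcc x0 x1) := ((hg.mono hsub).sub continuousOn_id)
  have h0 : g x0 - x0 ≤ 0 := by rw [hgx0]; linarith [hx0.1]
  have h1 : 0 ≤ g x1 - x1 := by rw [hgx1]; linarith [hx1.2]
  obtain ⟨x, hx, hx'⟩ := intermediate_value_uIcc hc (mem_uIcc.2 (Or.inl ⟨h0, h1⟩))
  refine ⟨x, hsub hx, ?_⟩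
  simp only at hx'
  linarith

lemma cover_exact_aux {u v p q c d : ℝ} (hpq : p ≤ q) (g : ℝ → ℝ)
    (hg : ContinuousOn g (Icc u v)) (hc : c ∈ Icc u v) (hd : d ∈ Icc u v) (hcd : c ≤ d)
    (hgc : g c = p) (hgd : g d = q) :
    ∃ s t, u ≤ s ∧ s ≤ t ∧ t ≤ v ∧ g '' Icc s t = Icc p q := by
  have hcdsub : Icc c d ⊆ Icc u v := Icc_subset_Icc hc.1 hd.2
  set S : Set ℝ := Icc c d ∩ g ⁻¹' {p} with hS
  have hSc : IsClosed S := (hg.mono hcdsub).preimage_isClosed_of_isClosed isClosed_Icc isClosed_singleton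
  have hSne : S.Nonempty := ⟨c, ⟨left_mem_Icc.2 hcd, hgc⟩⟩
  have hSbd : BddAbove S := ⟨d, fun x hx => hx.1.2⟩
  set s := sSup S with hs
  have hsS : s ∈ S := hSc.csSup_mem hSne hSbd
  have hgs : g s = p := hsS.2
  set T : Set ℝ := Icc s d ∩ g ⁻¹' {q} with hT
  have hTsub : Icc s d ⊆ Icc u v := Icc_subset_Icc (hc.1.trans hsS.1.1) hd.2
  have hTc : IsClosed T := (hg.mono hTsub).preimage_isClosed_of_isClosed isClosed_Icc isClosed_singleton
  have hTne : T.Nonempty := ⟨d, ⟨right_mem_Icc.2 hsS.1.2, hgd⟩⟩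
  have hTbd : BddBelow T := ⟨s, fun x hx => hx.1.1⟩
  set t := sInf T with ht
  have htT : t ∈ T := hTc.csInf_mem hTne hTbd
  have hgt : g t = q := htT.2
  have hst : s ≤ t := htT.1.1
  have hstsub : Icc s t ⊆ Icc u v := Icc_subset_Icc (hc.1.trans hsS.1.1) (htT.1.2.trans hd.2)
  refine ⟨s, t, hc.1.trans hsS.1.1, hst, htT.1.2.trans hd.2, ?_⟩
  apply Subset.antisymm
  · rintro _ ⟨x, hx, rfl⟩
    by_contra hgx
    rw [mem_Icc, not_and_or, not_le, not_le] at hgx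
    rcases hgx with hgx | hgx
    · -- g x < p : find y ∈ [x,t] with g y = p, contradiction with sSup
      have hivt := intermediate_value_Icc hx.2 (hg.mono (Icc_subset_Icc (hstsub hx).1 (hstsub (right_mem_Icc.2 hst)).2))
      obtain ⟨y, hy, hgy⟩ := hivt (show p ∈ Icc (g x) (g t) from ⟨hgx.le, hgt ▸ hpq⟩)
      have hyS : y ∈ S := ⟨⟨hsS.1.1.trans (hx.1.trans hy.1), hy.2.trans htT.1.2⟩, hgy⟩
      have hys : y ≤ s := le_csSup hSbd hyS
      have hxs : x = s := le_antisymm (le_trans hy.1 hys) hx.1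
      rw [hxs, hgs] at hgx; exact lt_irrefl _ hgx
    · -- g x > q : find y ∈ [s,x] with g y = q, contradiction with sInf
      have hivt := intermediate_value_Icc hx.1 (hg.mono (Icc_subset_Icc (hstsub (left_mem_Icc.2 hst)).1 (hstsub hx).2))
      obtain ⟨y, hy, hgy⟩ := hivt (show q ∈ Icc (g s) (g x) from ⟨hgs ▸ hpq, hgx.le⟩)
      have hyT : y ∈ T := ⟨⟨hy.1, (hy.2.trans hx.2).trans htT.1.2⟩, hgy⟩
      have hty : t ≤ y := csInf_le hTbd hyT
      have hxt : x = t := le_antisymm hx.2 (hty.trans hy.2)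
      rw [hxt, hgt] at hgx; exact lt_irrefl _ hgx
  · -- ⊇ by IVT
    have := intermediate_value_Icc hst (hg.mono hstsub)
    rw [hgs, hgt] at this
    exact this

lemma cover_exact {u v p q : ℝ} (hpq : p ≤ q) (g : ℝ → ℝ)
    (hg : ContinuousOn g (Icc u v)) (hcov : Icc p q ⊆ g '' Icc u v) :
    ∃ s t, u ≤ s ∧ s ≤ t ∧ t ≤ v ∧ g '' Icc s t = Icc p q := by
  obtain ⟨c, hc, hgc⟩ := hcov (left_mem_Icc.2 hpq)
  obtain ⟨d, hd, hgd⟩ := hcov (right_mem_Icc.2 hpq)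
  rcases le_total c d with hcd | hcd
  · exact cover_exact_aux hpq g hg hc hd hcd hgc hgd
  · set h : ℝ → ℝ := fun x => g (-x) with hh
    have hmaps : MapsTo (fun x : ℝ => -x) (Icc (-v) (-u)) (Icc u v) := by
      intro x hx; show -x ∈ Icc u v
      exact ⟨by linarith [hx.2], by linarith [hx.1]⟩
    have hhc : ContinuousOn h (Icc (-v) (-u)) :=
      hg.comp (continuousOn_neg) hmaps
    have := cover_exact_aux hpq h hhc (c := -c) (d := -d)
      ⟨by linarith [hc.2], by linarith [hc.1]⟩ ⟨by linarith [hd.2], by linarith [hd.1]⟩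
      (by linarith) (by show g (- -c) = p; rw [neg_neg]; exact hgc) (by show g (- -d) = q; rw [neg_neg]; exact hgd)
    obtain ⟨s, t, h1, h2, h3, h4⟩ := this
    refine ⟨-t, -s, by linarith, by linarith, by linarith, ?_⟩
    rw [← h4, hh]
    have h5 : Icc (-t) (-s) = Neg.neg '' Icc s t := by
      ext x; simp only [Set.mem_image, mem_Icc]
      constructor
      · intro hx; exact ⟨-x, ⟨by linarith [hx.2], by linarith [hx.1]⟩, neg_neg x⟩
      · rintro ⟨y, hy, rfl⟩; exact ⟨by linarith [hy.2], by linarith [hy.1]⟩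
    rw [h5, Set.image_image]

lemma chain_lemma (f : ℝ → ℝ) {a b : ℝ} (hf : ContinuousOn f (Set.Icc a b)) :
    ∀ (n : ℕ) (lo hi : ℕ → ℝ),
    (∀ i, i ≤ n → lo i ≤ hi i) →
    (∀ i, i ≤ n → Icc (lo i) (hi i) ⊆ Icc a b) →
    (∀ i, i < n → Icc (lo (i+1)) (hi (i+1)) ⊆ f '' Icc (lo i) (hi i)) →
    ∃ s t, lo 0 ≤ s ∧ s ≤ t ∧ t ≤ hi 0 ∧
      (∀ i, i ≤ n → f^[i] '' Icc s t ⊆ Icc (lo i) (hi i)) ∧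
      f^[n] '' Icc s t = Icc (lo n) (hi n) := by
  intro n
  induction n with
  | zero =>
    intro lo hi hle _ _
    refine ⟨lo 0, hi 0, le_refl _, hle 0 le_rfl, le_refl _, ?_, by simp⟩
    intro i hi0
    interval_cases i
    simp
  | succ n ih =>
    intro lo hi hle hsub hcov
    obtain ⟨s', t', h1, h2, h3, h4, h5⟩ := ih (fun i => lo (i+1)) (fun i => hi (i+1))
      (fun i hi' => hle (i+1) (Nat.succ_le_succ hi'))
      (fun i hi' => hsub (i+1) (Nat.succ_le_succ hi'))
      (fun i hi' => hcov (i+1) (Nat.succ_lt_succ hi'))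
    have hc0 : Icc s' t' ⊆ f '' Icc (lo 0) (hi 0) :=
      (Icc_subset_Icc h1 h3).trans (hcov 0 (Nat.succ_pos n))
    obtain ⟨s, t, g1, g2, g3, g4⟩ := cover_exact h2 f (hf.mono (hsub 0 (Nat.zero_le _))) hc0
    have himg : ∀ j, f^[j+1] '' Icc s t = f^[j] '' Icc s' t' := by
      intro j
      rw [Function.iterate_succ, Set.image_comp, g4]
    refine ⟨s, t, g1, g2, g3, ?_, by rw [himg n, h5]⟩
    intro i hin
    match i with
    | 0 => simpa using Icc_subset_Icc g1 g3
    | (j+1) => rw [himg j]; exact h4 j (Nat.le_of_succ_le_succ hin)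


lemma iter_cont {a b : ℝ} (f : ℝ → ℝ) (hf : ContinuousOn f (Icc a b))
    (hmaps : MapsTo f (Icc a b) (Icc a b)) : ∀ n, ContinuousOn (f^[n]) (Icc a b) := by
  intro n
  induction n with
  | zero => simpa using continuousOn_id
  | succ n ih => rw [Function.iterate_succ]; exact ih.comp hf hmaps

lemma main_case {a b : ℝ} (f : ℝ → ℝ)
    (hf : ContinuousOn f (Set.Icc a b)) (hmaps : Set.MapsTo f (Set.Icc a b) (Set.Icc a b))
    {α β γ : ℝ} (hαm : α ∈ Set.Icc a b) (hγm : γ ∈ Set.Icc a b)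
    (hαβ : α < β) (hβγ : β < γ) (e1 : f α = β) (e2 : f β = γ) (e3 : f γ = α) :
    ∀ n : ℕ, 0 < n → ∃ y ∈ Set.Icc a b, IsLeastPeriod f y n := by
  have hβm : β ∈ Icc a b := ⟨hαm.1.trans hαβ.le, hβγ.le.trans hγm.2⟩
  have hsub1 : Icc β γ ⊆ Icc a b := Icc_subset_Icc hβm.1 hγm.2
  have hsub0 : Icc α β ⊆ Icc a b := Icc_subset_Icc hαm.1 hβm.2
  have cov11 : Icc β γ ⊆ f '' Icc β γ := by
    have := intermediate_value_Icc' hβγ.le (hf.mono hsub1)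
    rw [e2, e3] at this
    exact (Icc_subset_Icc hαβ.le le_rfl).trans this
  have cov10 : Icc α β ⊆ f '' Icc β γ := by
    have := intermediate_value_Icc' hβγ.le (hf.mono hsub1)
    rw [e2, e3] at this
    exact (Icc_subset_Icc le_rfl hβγ.le).trans this
  have cov01 : Icc β γ ⊆ f '' Icc α β := by
    have := intermediate_value_Icc hαβ.le (hf.mono hsub0)
    rwa [e1, e2] at this
  intro n hn
  rcases eq_or_lt_of_le (Nat.one_le_iff_ne_zero.2 hn.ne') with h1 | h2
  · -- n = 1 : fixed point in [β, γ]
    obtain ⟨x, hx, hfx⟩ := fix_of_cover hβγ.le f (hf.mono hsub1) cov11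
    exact ⟨x, hsub1 hx, by omega, by rw [← h1]; simpa using hfx,
      fun k hk hk' => absurd (by omega : k < 1 → False) (by simp [show ¬ k < 1 from by omega]; omega)⟩
  · -- n ≥ 2
    set lo : ℕ → ℝ := fun i => if i = n - 1 then α else β with hlo
    set hi : ℕ → ℝ := fun i => if i = n - 1 then β else γ with hhi
    have hle : ∀ i, i ≤ n → lo i ≤ hi i := by
      intro i _; simp only [hlo, hhi]; split <;> [exact hαβ.le; exact hβγ.le]
    have hsubs : ∀ i, i ≤ n → Icc (lo i) (hi i) ⊆ Icc a b := by
      intro i _; simp only [hlo, hhi]; split <;> [exact hsub0; exact hsub1]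
    have hcovs : ∀ i, i < n → Icc (lo (i+1)) (hi (i+1)) ⊆ f '' Icc (lo i) (hi i) := by
      intro i hin
      simp only [hlo, hhi]
      rcases eq_or_ne i (n-1) with rfl | hne
      · rw [if_pos rfl, if_pos rfl, if_neg (by omega), if_neg (by omega)]
        exact cov01
      · rw [if_neg hne, if_neg hne]
        rcases eq_or_ne (i+1) (n-1) with he | he
        · rw [if_pos he, if_pos he]; exact cov10
        · rw [if_neg he, if_neg he]; exact cov11
    obtain ⟨s, t, g1, g2, g3, g4, g5⟩ := chain_lemma f hf n lo hi hle hsubs hcovs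
    have h0ne : (0:ℕ) ≠ n - 1 := by omega
    have hnne : n ≠ n - 1 := by omega
    simp only [hlo, hhi, if_neg h0ne, if_neg hnne] at g1 g3 g5
    have hstsub : Icc s t ⊆ Icc β γ := Icc_subset_Icc g1 g3
    have hcovn : Icc s t ⊆ f^[n] '' Icc s t := by rw [g5]; exact hstsub
    obtain ⟨x, hx, hfnx⟩ := fix_of_cover g2 (f^[n])
      ((iter_cont f hf hmaps n).mono (hstsub.trans hsub1)) hcovn
    have hxab : x ∈ Icc a b := hsub1 (hstsub hx)
    have hit : ∀ i, i ≤ n → f^[i] x ∈ Icc (lo i) (hi i) :=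
      fun i hin => g4 i hin ⟨x, hx, rfl⟩
    refine ⟨x, hxab, hn, hfnx, ?_⟩
    intro k hk hkn hfkx
    -- derive contradiction
    have hm : Function.IsPeriodicPt f (Nat.gcd k n) x :=
      Function.IsPeriodicPt.gcd hfkx hfnx
    set m := Nat.gcd k n with hmdef
    have hm0 : 0 < m := Nat.gcd_pos_of_pos_left _ hk
    have hmn : m < n := lt_of_le_of_lt (Nat.le_of_dvd hk (Nat.gcd_dvd_left k n)) hkn
    have hj : n - 1 = (n - 1 - m) + m := by omega
    have hfn1 : f^[n-1] x = f^[n-1-m] x := by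
      conv_lhs => rw [hj, Function.iterate_add_apply]
      rw [hm]
    have hmemI0 : f^[n-1] x ∈ Icc α β := by
      have := hit (n-1) (by omega)
      simpa only [hlo, hhi, if_pos rfl] using this
    have hmemI1 : f^[n-1] x ∈ Icc β γ := by
      rw [hfn1]
      have := hit (n-1-m) (by omega)
      simpa only [hlo, hhi, if_neg (show n-1-m ≠ n-1 by omega)] using this
    have hβeq : f^[n-1] x = β := le_antisymm hmemI0.2 hmemI1.1
    have hxγ : x = γ := by
      have : f^[n] x = f (f^[n-1] x) := by
        conv_lhs => rw [show n = (n-1) + 1 by omega, Function.iterate_succ_apply']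
      rw [hfnx, hβeq, e2] at this
      exact this
    rcases eq_or_lt_of_le (show 2 ≤ n from h2) with h2' | h3
    · -- n = 2 : m = 1, f x = x, but f γ = α ≠ γ
      have hm1 : m = 1 := by omega
      have : f x = x := by
        have := hm
        rw [hm1] at this
        simpa [Function.IsPeriodicPt, Function.IsFixedPt] using this
      rw [hxγ, e3] at this
      linarith
    · -- n ≥ 3 : f x = α must lie in [β,γ], contradiction
      have : f^[1] x ∈ Icc β γ := by
        have := hit 1 (by omega)
        simpa only [hlo, hhi, if_neg (show (1:ℕ) ≠ n-1 by omega)] using this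
      rw [Function.iterate_one, hxγ, e3] at this
      linarith [this.1]
lemma main_case2 {a b : ℝ} (f : ℝ → ℝ)
    (hf : ContinuousOn f (Set.Icc a b)) (hmaps : Set.MapsTo f (Set.Icc a b) (Set.Icc a b))
    {α β γ : ℝ} (hαm : α ∈ Set.Icc a b) (hγm : γ ∈ Set.Icc a b)
    (hαβ : α < β) (hβγ : β < γ) (e1 : f α = γ) (e2 : f γ = β) (e3 : f β = α) :
    ∀ n : ℕ, 0 < n → ∃ y ∈ Set.Icc a b, IsLeastPeriod f y n := by
  set g : ℝ → ℝ := fun y => -f (-y) with hg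
  have hm1 : MapsTo (fun y : ℝ => -y) (Icc (-b) (-a)) (Icc a b) := by
    intro y hy; show -y ∈ Icc a b; exact ⟨by linarith [hy.2], by linarith [hy.1]⟩
  have hgc : ContinuousOn g (Icc (-b) (-a)) := (hf.comp continuousOn_neg hm1).neg
  have hgm : MapsTo g (Icc (-b) (-a)) (Icc (-b) (-a)) := by
    intro y hy
    have := hmaps (hm1 hy)
    show -f (-y) ∈ Icc (-b) (-a)
    exact ⟨by linarith [this.2], by linarith [this.1]⟩
  have hiter : ∀ k y, g^[k] (-y) = -(f^[k] y) := by
    intro k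
    induction k with
    | zero => simp
    | succ k ih =>
      intro y
      rw [Function.iterate_succ_apply, Function.iterate_succ_apply]
      have h1 : g (-y) = -(f y) := by simp [hg]
      rw [h1, ih]
  have key := main_case g hgc hgm (α := -γ) (β := -β) (γ := -α)
    ⟨neg_le_neg hγm.2, neg_le_neg hγm.1⟩ ⟨neg_le_neg hαm.2, neg_le_neg hαm.1⟩
    (neg_lt_neg hβγ) (neg_lt_neg hαβ)
    (by simp [hg, e2]) (by simp [hg, e3]) (by simp [hg, e1])
  intro n hn
  obtain ⟨y', hy', hp0, hp1, hp2⟩ := key n hn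
  refine ⟨-y', ⟨by linarith [hy'.2], by linarith [hy'.1]⟩, hp0, ?_, ?_⟩
  · have := hiter n (-y')
    rw [neg_neg, hp1] at this
    linarith [this]
  · intro k hk hkn hfk
    apply hp2 k hk hkn
    have := hiter k (-y')
    rw [neg_neg, hfk, neg_neg] at this
    exact this
/-- Period three implies all periods: if a continuous self-map of a compact
interval has a periodic point of least period `3`, then for every positive integer `n`
it has a periodic point of least period `n`. -/
theorem period_three_implies_all {a b : ℝ} (hab : a ≤ b) (f : ℝ → ℝ)
    (hf : ContinuousOn f (Set.Icc a b)) (hmaps : Set.MapsTo f (Set.Icc a b) (Set.Icc a b))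
    (h : ∃ x ∈ Set.Icc a b, IsLeastPeriod f x 3) :
    ∀ n : ℕ, 0 < n → ∃ y ∈ Set.Icc a b, IsLeastPeriod f y n := by
  obtain ⟨x, hx, _, h3, hlt⟩ := h
  have h3' : f (f (f x)) = x := by
    have : f^[3] x = f (f (f x)) := by
      rw [show (3:ℕ) = 2 + 1 from rfl, Function.iterate_succ_apply',
        show (2:ℕ) = 1 + 1 from rfl, Function.iterate_succ_apply', Function.iterate_one]
    rwa [← this]
  have ne01 : x ≠ f x := fun e => hlt 1 one_pos (by norm_num) (by simpa using e.symm)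
  have ne02 : x ≠ f (f x) := fun e => hlt 2 two_pos (by norm_num)
    (by rw [show (2:ℕ) = 1 + 1 from rfl, Function.iterate_succ_apply', Function.iterate_one]
        exact e.symm)
  have ne12 : f x ≠ f (f x) := by
    intro e
    have h4 := congrArg f e
    rw [h3'] at h4
    exact ne01 (e.trans h4).symm
  have hx1 : f x ∈ Set.Icc a b := hmaps hx
  have hx2 : f (f x) ∈ Set.Icc a b := hmaps hx1
  rcases (Ne.lt_or_gt ne01) with h01 | h01
  · rcases (Ne.lt_or_gt ne12) with h12 | h12
    · exact main_case f hf hmaps hx hx2 h01 h12 rfl rfl h3'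
    · rcases (Ne.lt_or_gt ne02) with h02 | h02
      · exact main_case2 f hf hmaps hx hx1 h02 h12 rfl rfl h3'
      · exact main_case f hf hmaps hx2 hx1 h02 h01 h3' rfl rfl
  · rcases (Ne.lt_or_gt ne12) with h12 | h12
    · rcases (Ne.lt_or_gt ne02) with h02 | h02
      · exact main_case2 f hf hmaps hx1 hx2 h01 h02 rfl h3' rfl
      · exact main_case f hf hmaps hx1 hx h12 h02 rfl h3' rfl
    · exact main_case2 f hf hmaps hx2 hx h12 h01 h3' rfl rfl
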